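/- Let b : ℕ^{r+1} → ℂ satisfy: b(k) = 0 unless k_{r+1} is even, k_{r+1} ≥ 2, and k_i ≤ k_{r+1} for all 1 ≤ i ≤ r; and |b(k)| ≤ C·q^{(1/2+ε)|k| − 1} for all k. Then for every z ∈ ℂ^{r+1} with |z_i| ≤ q^{−1/2+ε} for 1 ≤ i ≤ r and |z_{r+1}| ≤ q^{−σ}, the family (b(k)·z^k)_{k∈ℕ^{r+1}} is absolutely summable and |Σ_k b(k)·z^k| ≤ C·q^{−2σ+(4r+2)ε}·(1 − q^{−2ε})^{−r}·(1 − q^{1−2σ+(4r+2)ε})^{−1}. -/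

import Mathlib

open Finset

private lemma geom_partial_le {t : ℝ} (h0 : 0 ≤ t) (h1 : t < 1) (n : ℕ) :
    ∑ j ∈ range n, t ^ j ≤ (1 - t)⁻¹ := by
  have h : (0:ℝ) < 1 - t := by linarith
  rw [geom_sum_eq (ne_of_lt h1) n]
  have h2 : (t ^ n - 1) / (t - 1) = (1 - t ^ n) / (1 - t) := by
    rw [← neg_div_neg_eq]; ring_nf
  rw [h2, ← one_div]
  gcongr
  have := pow_nonneg h0 n; linarith

set_option maxHeartbeats 1000000 in
/-- Estimate for the even part of the local series: if the coefficients `b(k)` are supported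
on tuples with `k_{r+1}` even, `k_{r+1} ≥ 2` and `k_i ≤ k_{r+1}` for `i ≤ r`, and satisfy
`|b(k)| ≤ C q^{(1/2+ε)|k| - 1}`, then for `|z_i| ≤ q^{-1/2+ε}` (`i ≤ r`) and
`|z_{r+1}| ≤ q^{-σ}` the series `∑ b(k) z^k` is absolutely summable, with sum of absolute
value at most `C q^{-2σ+(4r+2)ε} (1-q^{-2ε})^{-r} (1-q^{1-2σ+(4r+2)ε})^{-1}`. -/
theorem even_part_estimate (r : ℕ) (hr : 1 ≤ r) (q : ℝ) (hq : 1 < q)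
    (C : ℝ) (hC : 0 ≤ C) (ε σ : ℝ) (hε : 0 < ε) (hσ : 1 / 2 < σ)
    (hcond : 1 - 2 * σ + (4 * (r : ℝ) + 2) * ε < 0)
    (b : (Fin (r + 1) → ℕ) → ℂ)
    (hsupp : ∀ k : Fin (r + 1) → ℕ,
      ¬(Even (k (Fin.last r)) ∧ 2 ≤ k (Fin.last r) ∧
          ∀ i : Fin r, k i.castSucc ≤ k (Fin.last r)) → b k = 0)
    (hbound : ∀ k : Fin (r + 1) → ℕ,
      ‖b k‖ ≤ C * q ^ ((1 / 2 + ε) * (∑ j, (k j : ℝ)) - 1))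
    (z : Fin (r + 1) → ℂ)
    (hz : ∀ i : Fin r, ‖z i.castSucc‖ ≤ q ^ (-(1 / 2) + ε))
    (hzlast : ‖z (Fin.last r)‖ ≤ q ^ (-σ)) :
    Summable (fun k : Fin (r + 1) → ℕ => ‖b k * ∏ j, z j ^ k j‖) ∧
    ‖∑' k : Fin (r + 1) → ℕ, b k * ∏ j, z j ^ k j‖ ≤
      C * q ^ (-2 * σ + (4 * (r : ℝ) + 2) * ε) * ((1 - q ^ (-2 * ε))⁻¹) ^ r *
        (1 - q ^ (1 - 2 * σ + (4 * (r : ℝ) + 2) * ε))⁻¹ := by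
  classical
  have hq0 : (0:ℝ) < q := lt_trans one_pos hq
  set t : ℝ := q ^ (-2 * ε) with ht_def
  have ht0 : 0 < t := Real.rpow_pos_of_pos hq0 _
  have ht1 : t < 1 := Real.rpow_lt_one_of_one_lt_of_neg hq (by linarith)
  set δ : ℝ := 1/2 + (2*(r:ℝ)+1)*ε - σ with hδ_def
  have hδ : δ < 0 := by rw [hδ_def]; nlinarith [hε.le]
  set u : ℝ := q ^ δ with hu_def
  have hu0 : 0 < u := Real.rpow_pos_of_pos hq0 _
  have hu1 : u < 1 := Real.rpow_lt_one_of_one_lt_of_neg hq hδ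
  have key : ∀ (a : ℝ) (n : ℕ), (q ^ a) ^ n = q ^ (a * n) := fun a n => by
    rw [Real.rpow_mul hq0.le, Real.rpow_natCast]
  have hw : u ^ 2 = q ^ (1 - 2 * σ + (4 * (r : ℝ) + 2) * ε) := by
    rw [hu_def, key]
    congr 1
    rw [hδ_def]; push_cast; ring
  have hw0 : 0 ≤ u ^ 2 := sq_nonneg u
  have hw1 : u ^ 2 < 1 := by
    calc u ^ 2 ≤ u := by nlinarith
    _ < 1 := hu1
  set D : ℝ := C * q ^ (-1 : ℝ) with hD_def
  have hD0 : 0 ≤ D := mul_nonneg hC (Real.rpow_pos_of_pos hq0 _).le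
  set P : (Fin (r + 1) → ℕ) → Prop := fun k =>
    Even (k (Fin.last r)) ∧ 2 ≤ k (Fin.last r) ∧
      ∀ i : Fin r, k i.castSucc ≤ k (Fin.last r) with hP_def
  set G : (Fin (r + 1) → ℕ) → ℝ := fun k =>
    if P k then D * u ^ (k (Fin.last r)) *
        ∏ i : Fin r, t ^ (k (Fin.last r) - k i.castSucc) else 0 with hG_def
  have hG0 : ∀ k, 0 ≤ G k := by
    intro k
    simp only [hG_def]
    split_ifs
    · positivity
    · exact le_refl 0
  -- pointwise bound
  have hFG : ∀ k, ‖b k * ∏ j, z j ^ k j‖ ≤ G k := by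
    intro k
    by_cases hk : P k
    · obtain ⟨heven, h2m, hle⟩ := id hk
      set m := k (Fin.last r) with hm_def
      have hzn : ∀ j, (0:ℝ) ≤ ‖z j‖ := fun j => norm_nonneg _
      have habs : ‖b k * ∏ j, z j ^ k j‖
          = ‖b k‖ * ∏ j, ‖z j‖ ^ k j := by
        rw [norm_mul, norm_prod]
        simp [norm_pow]
      have hprod : ∏ j, ‖z j‖ ^ k j ≤
          (∏ i : Fin r, (q ^ (-(1/2) + ε)) ^ (k i.castSucc)) * (q ^ (-σ : ℝ)) ^ m := by
        rw [Fin.prod_univ_castSucc (fun j => ‖z j‖ ^ k j)]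
        apply mul_le_mul ?_ ?_ (pow_nonneg (hzn _) _)
          (prod_nonneg fun i _ => pow_nonneg (Real.rpow_pos_of_pos hq0 _).le _)
        · exact Finset.prod_le_prod (fun i _ => pow_nonneg (hzn _) _)
            (fun i _ => pow_le_pow_left₀ (hzn _) (hz i) _)
        · exact pow_le_pow_left₀ (hzn _) hzlast _
      set T : ℝ := ∑ i : Fin r, (k i.castSucc : ℝ) with hT_def
      have hS : (∑ j, ((k j : ℝ))) = T + (m : ℝ) := by
        rw [Fin.sum_univ_castSucc (fun j => ((k j : ℝ)))]
      have h1 : ∏ i : Fin r, (q ^ (-(1/2) + ε)) ^ (k i.castSucc)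
          = q ^ ((-(1/2) + ε) * T) := by
        rw [hT_def, Finset.mul_sum, Real.rpow_sum_of_pos hq0]
        exact Finset.prod_congr rfl fun i _ => key _ _
      have hsum2 : ∑ i : Fin r, ((m:ℝ) - (k i.castSucc : ℝ)) = (r:ℝ) * (m:ℝ) - T := by
        rw [Finset.sum_sub_distrib, Finset.sum_const, card_univ, Fintype.card_fin, hT_def]
        push_cast; ring
      have h2 : ∏ i : Fin r, t ^ (m - k i.castSucc)
          = q ^ ((-2*ε) * ((r:ℝ) * (m:ℝ) - T)) := by
        rw [← hsum2, Finset.mul_sum, Real.rpow_sum_of_pos hq0]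
        refine Finset.prod_congr rfl fun i _ => ?_
        rw [ht_def, key]
        congr 1
        rw [Nat.cast_sub (hle i)]
      have h3 : (q ^ (-σ : ℝ)) ^ m = q ^ (-σ * (m:ℝ)) := key _ _
      have h4 : u ^ m = q ^ (δ * (m:ℝ)) := key _ _
      have hGk : G k = D * u ^ m * ∏ i : Fin r, t ^ (m - k i.castSucc) := by
        simp only [hG_def]
        rw [if_pos hk]
      have hmul : ∀ A B : ℝ, q ^ A * q ^ B = q ^ (A + B) := fun A B =>
        (Real.rpow_add hq0 _ _).symm
      calc ‖b k * ∏ j, z j ^ k j‖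
          = ‖b k‖ * ∏ j, ‖z j‖ ^ k j := habs
        _ ≤ (C * q ^ ((1 / 2 + ε) * (∑ j, ((k j : ℝ))) - 1)) *
            ((∏ i : Fin r, (q ^ (-(1/2) + ε)) ^ (k i.castSucc)) * (q ^ (-σ : ℝ)) ^ m) := by
            apply mul_le_mul (hbound k) hprod
              (prod_nonneg fun j _ => pow_nonneg (hzn _) _)
            positivity
        _ = G k := by
            rw [hGk, h1, h2, h3, h4, hS, hD_def]
            simp only [mul_assoc, hmul]
            congr 2
            rw [hδ_def]
            ring
    · rw [hsupp k hk]
      simp [hG_def, hk]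
  -- the slice function
  set g : ℕ × (Fin r → ℕ) → ℝ := fun p => G (Fin.snoc p.2 p.1) with hg_def
  have hg0 : ∀ p, 0 ≤ g p := fun p => hG0 _
  have hgval : ∀ (m : ℕ) (v : Fin r → ℕ), g (m, v) =
      if (Even m ∧ 2 ≤ m ∧ ∀ i : Fin r, v i ≤ m) then
        D * u ^ m * ∏ i : Fin r, t ^ (m - v i) else 0 := by
    intro m v
    rw [hg_def, hG_def]
    simp [hP_def, Fin.snoc_last, Fin.snoc_castSucc]
  -- slice support
  have hslice_supp : ∀ m : ℕ, ∀ v ∉ Fintype.piFinset (fun _ : Fin r => range (m+1)),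
      g (m, v) = 0 := by
    intro m v hv
    rw [hgval, if_neg]
    rintro ⟨-, -, hle⟩
    apply hv
    rw [Fintype.mem_piFinset]
    intro i
    rw [mem_range, Nat.lt_succ_iff]
    exact hle i
  have hslice_summable : ∀ m : ℕ, Summable (fun v => g (m, v)) :=
    fun m => summable_of_ne_finset_zero (hslice_supp m)
  set B : ℕ → ℝ := fun m => if Even m ∧ 2 ≤ m then D * ((1-t)⁻¹) ^ r * u ^ m else 0
    with hB_def
  have h1t : (0:ℝ) < 1 - t := by linarith
  have hB0 : ∀ m, 0 ≤ B m := by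
    intro m; simp only [hB_def]; split_ifs
    · positivity
    · exact le_refl 0
  have hslice_sum_le : ∀ m : ℕ, ∑' v : Fin r → ℕ, g (m, v) ≤ B m := by
    intro m
    rw [tsum_eq_sum (hslice_supp m)]
    by_cases hm : Even m ∧ 2 ≤ m
    · simp only [hB_def, if_pos hm]
      have hstep : ∀ v ∈ Fintype.piFinset (fun _ : Fin r => range (m+1)),
          g (m, v) = D * u ^ m * ∏ i : Fin r, t ^ (m - v i) := by
        intro v hv
        rw [hgval, if_pos]
        refine ⟨hm.1, hm.2, fun i => ?_⟩
        have := Fintype.mem_piFinset.mp hv i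
        rwa [mem_range, Nat.lt_succ_iff] at this
      rw [Finset.sum_congr rfl hstep, ← Finset.mul_sum,
        ← Finset.prod_univ_sum (fun _ : Fin r => range (m+1)) (fun _ j => t ^ (m - j))]
      have hgeo : ∑ j ∈ range (m+1), t ^ (m - j) ≤ (1-t)⁻¹ := by
        calc ∑ j ∈ range (m+1), t ^ (m - j)
            = ∑ j ∈ range (m+1), t ^ j := Finset.sum_range_reflect (fun j => t ^ j) (m+1)
          _ ≤ (1-t)⁻¹ := geom_partial_le ht0.le ht1 _
      calc D * u ^ m * ∏ _i : Fin r, ∑ j ∈ range (m+1), t ^ (m - j)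
          ≤ D * u ^ m * ((1-t)⁻¹) ^ r := by
            apply mul_le_mul_of_nonneg_left ?_ (by positivity)
            calc ∏ _i : Fin r, ∑ j ∈ range (m+1), t ^ (m - j)
                ≤ ∏ _i : Fin r, (1-t)⁻¹ := Finset.prod_le_prod
                  (fun _ _ => Finset.sum_nonneg fun _ _ => pow_nonneg ht0.le _)
                  (fun _ _ => hgeo)
              _ = ((1-t)⁻¹) ^ r := by rw [Finset.prod_const, card_univ, Fintype.card_fin]
        _ = D * ((1-t)⁻¹) ^ r * u ^ m := by ring
    · simp only [hB_def, if_neg hm]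
      refine le_of_eq (Finset.sum_eq_zero fun v hv => ?_)
      rw [hgval, if_neg]
      tauto
  have hBle : ∀ m, B m ≤ (D * ((1-t)⁻¹) ^ r) * u ^ m := by
    intro m; simp only [hB_def]; split_ifs
    · exact le_refl _
    · positivity
  have hBsummable : Summable B :=
    Summable.of_nonneg_of_le hB0 hBle
      ((summable_geometric_of_lt_one hu0.le hu1).mul_left _)
  have houter : Summable (fun m => ∑' v, g (m, v)) :=
    Summable.of_nonneg_of_le (fun m => tsum_nonneg fun v => hg0 _) hslice_sum_le hBsummable
  have hgsummable : Summable g := (summable_prod_of_nonneg hg0).mpr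
    ⟨hslice_summable, houter⟩
  set e : ℕ × (Fin r → ℕ) ≃ (Fin (r+1) → ℕ) := Fin.snocEquiv (fun _ => ℕ) with he_def
  have hge : ∀ p, g p = G (e p) := fun p => rfl
  have hGsummable : Summable G := (Equiv.summable_iff e).mp hgsummable
  have htsumB : ∑' m, B m = D * ((1-t)⁻¹) ^ r * (u^2 * (1 - u^2)⁻¹) := by
    have hBeq : B = fun m =>
        (D * ((1-t)⁻¹) ^ r) * (if Even m ∧ 2 ≤ m then u ^ m else 0) := by
      funext m; simp only [hB_def]; split_ifs <;> simp [mul_assoc]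
    rw [hBeq, tsum_mul_left]
    congr 1
    have hinj : Function.Injective (fun n : ℕ => 2*n + 2) := fun a b hab => by
      simpa using hab
    have hsupp' : Function.support (fun m : ℕ => if Even m ∧ 2 ≤ m then u ^ m else 0)
        ⊆ Set.range (fun n : ℕ => 2*n+2) := by
      intro m hm
      simp only [Function.mem_support] at hm
      by_contra hmem
      apply hm
      rw [if_neg]
      rintro ⟨⟨c, hc⟩, h2⟩
      exact hmem ⟨c - 1, by show 2*(c-1)+2 = m; omega⟩
    have hval : ∀ n : ℕ, (if Even (2*n+2) ∧ 2 ≤ 2*n+2 then u ^ (2*n+2) else 0)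
        = u^2 * (u^2) ^ n := by
      intro n
      rw [if_pos ⟨⟨n+1, by ring⟩, by omega⟩, pow_add, pow_mul]
      ring
    calc (∑' m : ℕ, if Even m ∧ 2 ≤ m then u ^ m else 0)
        = ∑' n : ℕ, (if Even (2*n+2) ∧ 2 ≤ 2*n+2 then u ^ (2*n+2) else 0) :=
          (hinj.tsum_eq hsupp').symm
      _ = ∑' n : ℕ, u^2 * (u^2) ^ n := tsum_congr hval
      _ = u^2 * (1 - u^2)⁻¹ := by
          rw [tsum_mul_left, tsum_geometric_of_lt_one hw0 hw1]
  have htsumG : ∑' k, G k ≤ D * ((1-t)⁻¹) ^ r * (u^2 * (1 - u^2)⁻¹) := by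
    have h1 : ∑' k, G k = ∑' p : ℕ × (Fin r → ℕ), g p := (e.tsum_eq G).symm
    rw [h1, Summable.tsum_prod' hgsummable hslice_summable, ← htsumB]
    exact Summable.tsum_le_tsum hslice_sum_le houter hBsummable
  have hFsummable : Summable (fun k : Fin (r+1) → ℕ => ‖b k * ∏ j, z j ^ k j‖) :=
    Summable.of_nonneg_of_le (fun k => norm_nonneg _) hFG hGsummable
  refine ⟨hFsummable, ?_⟩
  have hnorm := norm_tsum_le_tsum_norm
    (f := fun k : Fin (r+1) → ℕ => b k * ∏ j, z j ^ k j)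
    hFsummable
  refine hnorm.trans ((Summable.tsum_le_tsum hFG hFsummable hGsummable).trans (htsumG.trans_eq ?_))
  have hcomb : D * q ^ (1 - 2*σ + (4*(r:ℝ)+2)*ε) = C * q ^ (-2*σ + (4*(r:ℝ)+2)*ε) := by
    rw [hD_def, mul_assoc, ← Real.rpow_add hq0]
    congr 1; ring
  rw [hw]
  linear_combination ((1 - t)⁻¹ ^ r * (1 - q ^ (1 - 2*σ + (4*(r:ℝ)+2)*ε))⁻¹) * hcomb
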